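/- Let n ≥ 1 be an integer, x₀ ≥ 1, and let φ : [x₀,∞) → (0,∞) be continuously differentiable, strictly decreasing, with φ(x) → 0 as x → ∞ and with x ↦ xφ(x) non-increasing. Set t₀ := ln(2/(√(n+1)φ(x₀))) and ρ(t) := e^{−t}·φ⁻¹(2/(√(n+1)e^t)) for t ≥ t₀. Then ∫_{t₀}^∞ ρ(t)^n dt < ∞ if and only if ∫_{x₀}^∞ x^{n−1} φ(x)^n dx < ∞. -/

import Mathlib

open MeasureTheory Set

lemma my_lintegral_Ici_le_iSup_Icc (x₀ : ℝ) (f : ℝ → ENNReal) :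
    ∫⁻ x in Set.Ici x₀, f x ≤ ⨆ k : ℕ, ∫⁻ x in Set.Icc x₀ (x₀ + k), f x := by
  have hU : Set.Ici x₀ = ⋃ k : ℕ, Set.Icc x₀ (x₀ + k) := by
    ext x
    simp only [Set.mem_Ici, Set.mem_iUnion, Set.mem_Icc]
    constructor
    · intro hx
      obtain ⟨k, hk⟩ := exists_nat_ge (x - x₀)
      exact ⟨k, hx, by linarith⟩
    · rintro ⟨k, h1, _⟩; exact h1
  have hd : Directed (· ⊆ ·) (fun k : ℕ => Set.Icc x₀ (x₀ + (k : ℝ))) := by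
    intro i j
    exact ⟨max i j, Set.Icc_subset_Icc le_rfl (by gcongr; exact_mod_cast le_max_left i j),
      Set.Icc_subset_Icc le_rfl (by gcongr; exact_mod_cast le_max_right i j)⟩
  rw [hU, MeasureTheory.lintegral]
  refine iSup₂_le fun g hg => ?_
  rw [MeasureTheory.SimpleFunc.lintegral_restrict_iUnion_of_directed g hd]
  refine iSup_mono fun k => ?_
  calc g.lintegral (volume.restrict (Set.Icc x₀ (x₀ + k)))
      = ∫⁻ x in Set.Icc x₀ (x₀ + k), g x := (g.lintegral_eq_lintegral _).symm
    _ ≤ _ := lintegral_mono hg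

lemma my_lintegral_image_eq {s : Set ℝ} {f f' : ℝ → ℝ}
    (hs : MeasurableSet s) (hf' : ∀ x ∈ s, HasDerivWithinAt f (f' x) s x)
    (hf : Set.InjOn f s) (g : ℝ → ENNReal) :
    ∫⁻ x in f '' s, g x = ∫⁻ x in s, ENNReal.ofReal |f' x| * g (f x) := by
  simpa only [ContinuousLinearMap.det_toSpanSingleton] using
    lintegral_image_eq_lintegral_abs_det_fderiv_mul volume hs
      (fun x hx => (hf' x hx).hasFDerivWithinAt) hf g

theorem rho_integral_iff_phi_integral (n : ℕ) (hn : 1 ≤ n)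
    (x₀ : ℝ) (hx₀ : 1 ≤ x₀) (φ ψ : ℝ → ℝ)
    (hφpos : ∀ x ∈ Set.Ici x₀, 0 < φ x)
    (hφanti : StrictAntiOn φ (Set.Ici x₀))
    (hφC1 : ContDiffOn ℝ 1 φ (Set.Ici x₀))
    (hφlim : Filter.Tendsto φ Filter.atTop (nhds 0))
    (hxφ : ∀ x y : ℝ, x₀ ≤ x → x ≤ y → y * φ y ≤ x * φ x)
    -- `ψ = φ⁻¹` is the inverse function of `φ`, defined on `(0, φ(x₀)]`
    (hψmem : ∀ y ∈ Set.Ioc (0 : ℝ) (φ x₀), ψ y ∈ Set.Ici x₀ ∧ φ (ψ y) = y)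
    (hψφ : ∀ x ∈ Set.Ici x₀, ψ (φ x) = x) :
    (∫⁻ t in Set.Ici (Real.log (2 / (Real.sqrt ((n : ℝ) + 1) * φ x₀))),
        ENNReal.ofReal
          ((Real.exp (-t) * ψ (2 / (Real.sqrt ((n : ℝ) + 1) * Real.exp t))) ^ n) ≠ ⊤) ↔
    (∫⁻ x in Set.Ici x₀, ENNReal.ofReal (x ^ (n - 1) * φ x ^ n) ≠ ⊤) := by
  obtain ⟨m, rfl⟩ : ∃ m, n = m + 1 := ⟨n - 1, (Nat.succ_pred_eq_of_pos hn).symm⟩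
  clear hn
  have hx0pos : (0 : ℝ) < x₀ := lt_of_lt_of_le one_pos hx₀
  have hφx₀ : 0 < φ x₀ := hφpos x₀ Set.self_mem_Ici
  set a : ℝ := Real.sqrt (((m + 1 : ℕ) : ℝ) + 1) with hadef
  have hapos : 0 < a := Real.sqrt_pos.mpr (by positivity)
  set c : ℝ := 2 / a with hcdef
  have hcpos : 0 < c := div_pos two_pos hapos
  set φ' : ℝ → ℝ := derivWithin φ (Set.Ici x₀) with hφ'def
  have hφdiff : ∀ x ∈ Set.Ici x₀, HasDerivWithinAt φ (φ' x) (Set.Ici x₀) x := fun x hx =>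
    ((hφC1.differentiableOn one_ne_zero) x hx).hasDerivWithinAt
  have hφcont : ContinuousOn φ (Set.Ici x₀) := hφC1.continuousOn
  have hφ'cont : ContinuousOn φ' (Set.Ici x₀) :=
    hφC1.continuousOn_derivWithin (uniqueDiffOn_Ici x₀) le_rfl
  have hφ'nonpos : ∀ x ∈ Set.Ici x₀, φ' x ≤ 0 := by
    intro x hx
    have h := hasDerivWithinAt_iff_tendsto_slope.1 (hφdiff x hx)
    have hne : (nhdsWithin x (Set.Ici x₀ \ {x})).NeBot := by
      refine Filter.neBot_of_le (f := nhdsWithin x (Set.Ioi x)) (nhdsWithin_mono _ ?_)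
      intro y hy
      exact ⟨Set.mem_Ici.mpr (le_trans (Set.mem_Ici.mp hx) (le_of_lt (Set.mem_Ioi.mp hy))), ne_of_gt hy⟩
    refine le_of_tendsto h ?_
    filter_upwards [self_mem_nhdsWithin] with y hy
    obtain ⟨hy1, hy2⟩ := hy
    rw [slope_def_field]
    rcases lt_or_gt_of_ne (hy2 : y ≠ x) with h1 | h1
    · apply div_nonpos_of_nonneg_of_nonpos
      · have := hφanti hy1 hx h1
        linarith
      · linarith
    · apply div_nonpos_of_nonpos_of_nonneg
      · have := hφanti hx hy1 h1
        linarith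
      · linarith
  set T : ℝ → ℝ := fun x => Real.log c - Real.log (φ x) with hTdef
  set D : ℝ → ℝ := fun x => -(φ' x / φ x) with hDdef
  have hTderiv : ∀ x ∈ Set.Ici x₀, HasDerivWithinAt T (D x) (Set.Ici x₀) x := by
    intro x hx
    have hlog : HasDerivWithinAt (fun y => Real.log (φ y)) ((φ x)⁻¹ * φ' x) (Set.Ici x₀) x :=
      (Real.hasDerivAt_log (ne_of_gt (hφpos x hx))).comp_hasDerivWithinAt x (hφdiff x hx)
    have h := (hasDerivWithinAt_const x (Set.Ici x₀) (Real.log c)).sub hlog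
    have heq : 0 - (φ x)⁻¹ * φ' x = D x := by
      simp [hDdef, div_eq_inv_mul]
    rwa [heq] at h
  have hTmono : StrictMonoOn T (Set.Ici x₀) := by
    intro x hx y hy hxy
    have h1 : Real.log (φ y) < Real.log (φ x) :=
      Real.log_lt_log (hφpos y hy) (hφanti hx hy hxy)
    simp only [hTdef]
    linarith
  have hTcont : ContinuousOn T (Set.Ici x₀) := by
    refine continuousOn_const.sub (Real.continuousOn_log.comp hφcont ?_)
    intro x hx
    exact Set.mem_compl_singleton_iff.mpr (ne_of_gt (hφpos x hx))
  have hTtop : Filter.Tendsto T Filter.atTop Filter.atTop := by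
    have h1 : Filter.Tendsto (fun x => Real.log (φ x)) Filter.atTop Filter.atBot := by
      apply Real.tendsto_log_nhdsGT_zero.comp
      rw [tendsto_nhdsWithin_iff]
      exact ⟨hφlim, Filter.eventually_atTop.mpr ⟨x₀, fun x hx => hφpos x hx⟩⟩
    have h2 := Filter.tendsto_atTop_add_const_left _ (Real.log c) (Filter.tendsto_neg_atBot_atTop.comp h1)
    rw [hTdef]
    simpa [sub_eq_add_neg, Function.comp] using h2
  have hTimage : T '' Set.Ici x₀ = Set.Ici (T x₀) := by
    apply Set.Subset.antisymm
    · rintro _ ⟨x, hx, rfl⟩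
      exact hTmono.monotoneOn Set.self_mem_Ici hx hx
    · exact isPreconnected_Ici.intermediate_value_Ici Set.self_mem_Ici
        (Filter.le_principal_iff.mpr (Filter.Ici_mem_atTop x₀)) hTcont hTtop
  have ht₀ : Real.log (2 / (a * φ x₀)) = T x₀ := by
    show Real.log (2 / (a * φ x₀)) = Real.log c - Real.log (φ x₀)
    rw [← Real.log_div (ne_of_gt hcpos) (ne_of_gt hφx₀), hcdef, div_div]
  -- the functions A and B
  set A : ℝ → ℝ := fun x => x ^ m * φ x ^ (m + 1) with hAdef
  set B : ℝ → ℝ := fun x => x ^ (m + 1) * φ x ^ m * (-(φ' x)) with hBdef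
  have hA0 : ∀ x ∈ Set.Ici x₀, 0 ≤ A x := by
    intro x hx
    have h1 : (0:ℝ) < x := lt_of_lt_of_le hx0pos hx
    have h2 := hφpos x hx
    positivity
  have hB0 : ∀ x ∈ Set.Ici x₀, 0 ≤ B x := by
    intro x hx
    have h1 : (0:ℝ) < x := lt_of_lt_of_le hx0pos hx
    have h2 := hφpos x hx
    have h3 : 0 ≤ -(φ' x) := neg_nonneg.mpr (hφ'nonpos x hx)
    positivity
  have hAcont : ContinuousOn A (Set.Ici x₀) :=
    (continuousOn_pow m).mul (hφcont.pow (m + 1))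
  have hBcont : ContinuousOn B (Set.Ici x₀) :=
    ((continuousOn_pow (m + 1)).mul (hφcont.pow m)).mul hφ'cont.neg
  -- Step 1: change of variables
  have hpt : ∀ x ∈ Set.Ici x₀,
      ENNReal.ofReal |D x| *
        ENNReal.ofReal ((Real.exp (-T x) * ψ (2 / (a * Real.exp (T x)))) ^ (m + 1))
      = ENNReal.ofReal ((1 / c) ^ (m + 1)) * ENNReal.ofReal (B x) := by
    intro x hx
    have hφx := hφpos x hx
    have hexpT : Real.exp (T x) = c / φ x := by
      show Real.exp (Real.log c - Real.log (φ x)) = c / φ x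
      rw [Real.exp_sub, Real.exp_log hcpos, Real.exp_log hφx]
    have hexpnT : Real.exp (-T x) = φ x / c := by
      rw [Real.exp_neg, hexpT]
      field_simp
    have harg : 2 / (a * Real.exp (T x)) = φ x := by
      rw [hexpT, hcdef]
      field_simp
    have habs : |D x| = -(φ' x / φ x) := by
      show |(-(φ' x / φ x))| = -(φ' x / φ x)
      rw [abs_neg, abs_of_nonpos (div_nonpos_of_nonpos_of_nonneg (hφ'nonpos x hx) hφx.le)]
    rw [harg, hψφ x hx, hexpnT, habs,
      ← ENNReal.ofReal_mul (neg_nonneg.mpr (div_nonpos_of_nonpos_of_nonneg (hφ'nonpos x hx) hφx.le)),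
      ← ENNReal.ofReal_mul (by positivity : (0:ℝ) ≤ (1 / c) ^ (m + 1))]
    congr 1
    have hφne : φ x ≠ 0 := ne_of_gt hφx
    have hcne : c ≠ 0 := ne_of_gt hcpos
    show -(φ' x / φ x) * (φ x / c * x) ^ (m + 1)
        = (1 / c) ^ (m + 1) * (x ^ (m + 1) * φ x ^ m * -(φ' x))
    field_simp
    ring
  have step1 :
      (∫⁻ t in Set.Ici (Real.log (2 / (a * φ x₀))),
        ENNReal.ofReal ((Real.exp (-t) * ψ (2 / (a * Real.exp t))) ^ (m + 1)))
      = ENNReal.ofReal ((1 / c) ^ (m + 1)) * ∫⁻ x in Set.Ici x₀, ENNReal.ofReal (B x) := by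
    rw [ht₀, ← hTimage,
      my_lintegral_image_eq measurableSet_Ici hTderiv hTmono.injOn,
      setLIntegral_congr_fun measurableSet_Ici hpt,
      lintegral_const_mul'' _ (hBcont.aemeasurable measurableSet_Ici).ennreal_ofReal]
  -- Step 2: interval facts
  have hR : ∀ k : ℕ, x₀ ≤ x₀ + (k:ℝ) := fun k => le_add_of_nonneg_right (Nat.cast_nonneg k)
  have hIccsub : ∀ k : ℕ, Set.Icc x₀ (x₀ + (k:ℝ)) ⊆ Set.Ici x₀ := fun k => Set.Icc_subset_Ici_self
  have hGbound : ∀ k : ℕ, 0 ≤ (x₀ + (k:ℝ)) * φ (x₀ + (k:ℝ)) ∧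
      (x₀ + (k:ℝ)) * φ (x₀ + (k:ℝ)) ≤ x₀ * φ x₀ := fun k =>
    ⟨mul_nonneg (by linarith [hR k]) (hφpos _ (hR k)).le, hxφ x₀ _ le_rfl (hR k)⟩
  have hm1 : (0:ℝ) < (m:ℝ) + 1 := by positivity
  have hftc : ∀ k : ℕ,
      ((m:ℝ) + 1) * (∫ x in x₀..(x₀ + (k:ℝ)), A x) - ((m:ℝ) + 1) * (∫ x in x₀..(x₀ + (k:ℝ)), B x)
        = ((x₀ + (k:ℝ)) * φ (x₀ + (k:ℝ))) ^ (m+1) - (x₀ * φ x₀) ^ (m+1) := by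
    intro k
    have hAint : IntervalIntegrable A volume x₀ (x₀ + (k:ℝ)) :=
      ContinuousOn.intervalIntegrable_of_Icc (hR k) (hAcont.mono (hIccsub k))
    have hBint : IntervalIntegrable B volume x₀ (x₀ + (k:ℝ)) :=
      ContinuousOn.intervalIntegrable_of_Icc (hR k) (hBcont.mono (hIccsub k))
    have key : ∫ x in x₀..(x₀ + (k:ℝ)), (((m:ℝ)+1) * A x - ((m:ℝ)+1) * B x)
        = ((x₀ + (k:ℝ)) * φ (x₀ + (k:ℝ))) ^ (m+1) - (x₀ * φ x₀) ^ (m+1) := by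
      apply intervalIntegral.integral_eq_sub_of_hasDeriv_right_of_le
        (f := fun y => (y * φ y) ^ (m+1)) (hR k)
      · exact (continuousOn_id.mul (hφcont.mono (hIccsub k))).pow (m+1)
      · intro x hx
        have hxI : x ∈ Set.Ici x₀ := le_of_lt hx.1
        have hat : HasDerivAt φ (φ' x) x :=
          (hφdiff x hxI).hasDerivAt (Ici_mem_nhds hx.1)
        have h1 : HasDerivAt (fun y => (y * φ y) ^ (m+1))
            (((m+1 : ℕ):ℝ) * (x * φ x) ^ (m + 1 - 1) * (1 * φ x + x * φ' x)) x :=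
          ((hasDerivAt_id x).mul hat).pow (m+1)
        have h2 : ((m+1 : ℕ):ℝ) * (x * φ x) ^ (m + 1 - 1) * (1 * φ x + x * φ' x)
            = ((m:ℝ)+1) * A x - ((m:ℝ)+1) * B x := by
          simp only [Nat.add_sub_cancel, hAdef, hBdef]
          push_cast
          rw [mul_pow]
          ring
        rw [h2] at h1
        exact h1.hasDerivWithinAt
      · exact (hAint.const_mul _).sub (hBint.const_mul _)
    rw [intervalIntegral.integral_sub (hAint.const_mul _) (hBint.const_mul _),
      intervalIntegral.integral_const_mul, intervalIntegral.integral_const_mul] at key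
    exact key
  have hIAle : ∀ k : ℕ,
      (∫ x in x₀..(x₀ + (k:ℝ)), A x) ≤ ∫ x in x₀..(x₀ + (k:ℝ)), B x := by
    intro k
    have h := hftc k
    have hG : ((x₀ + (k:ℝ)) * φ (x₀ + (k:ℝ)))^(m+1) ≤ (x₀ * φ x₀)^(m+1) :=
      pow_le_pow_left₀ (hGbound k).1 (hGbound k).2 _
    nlinarith [h, hG, hm1]
  have hIBle : ∀ k : ℕ,
      (∫ x in x₀..(x₀ + (k:ℝ)), B x)
        ≤ (∫ x in x₀..(x₀ + (k:ℝ)), A x) + (x₀ * φ x₀)^(m+1) / ((m:ℝ)+1) := by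
    intro k
    have h := hftc k
    have hGR0 : 0 ≤ ((x₀ + (k:ℝ)) * φ (x₀ + (k:ℝ)))^(m+1) := pow_nonneg (hGbound k).1 _
    have key : (∫ x in x₀..(x₀ + (k:ℝ)), B x) - (∫ x in x₀..(x₀ + (k:ℝ)), A x)
        ≤ (x₀ * φ x₀)^(m+1) / ((m:ℝ)+1) := by
      rw [le_div_iff₀ hm1]
      nlinarith [h, hGR0]
    linarith
  have hlink : ∀ (f : ℝ → ℝ), ContinuousOn f (Set.Ici x₀) → (∀ x ∈ Set.Ici x₀, 0 ≤ f x) →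
      ∀ k : ℕ, (∫⁻ x in Set.Icc x₀ (x₀ + (k:ℝ)), ENNReal.ofReal (f x))
        = ENNReal.ofReal (∫ x in x₀..(x₀ + (k:ℝ)), f x) := by
    intro f hfc hf0 k
    rw [← ofReal_integral_eq_lintegral_ofReal
        ((hfc.mono (hIccsub k)).integrableOn_Icc)
        (ae_restrict_of_forall_mem measurableSet_Icc (fun x hx => hf0 x (hIccsub k hx)))]
    congr 1
    rw [intervalIntegral.integral_of_le (hR k), ← integral_Icc_eq_integral_Ioc]
  -- Conclusion
  rw [step1]
  simp only [Nat.add_sub_cancel]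
  show _ ↔ (∫⁻ x in Set.Ici x₀, ENNReal.ofReal (A x)) ≠ ⊤
  have hkne : ENNReal.ofReal ((1/c)^(m+1)) ≠ 0 := by
    rw [Ne, ENNReal.ofReal_eq_zero, not_le]
    positivity
  constructor
  · intro h
    have hB : (∫⁻ x in Set.Ici x₀, ENNReal.ofReal (B x)) ≠ ⊤ := by
      intro hc
      rw [hc, ENNReal.mul_top hkne] at h
      exact h rfl
    refine ne_top_of_le_ne_top hB ?_
    calc ∫⁻ x in Set.Ici x₀, ENNReal.ofReal (A x)
        ≤ ⨆ k : ℕ, ∫⁻ x in Set.Icc x₀ (x₀ + (k:ℝ)), ENNReal.ofReal (A x) :=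
          my_lintegral_Ici_le_iSup_Icc x₀ _
      _ ≤ ∫⁻ x in Set.Ici x₀, ENNReal.ofReal (B x) := by
          refine iSup_le fun k => ?_
          rw [hlink A hAcont hA0 k]
          calc ENNReal.ofReal (∫ x in x₀..(x₀ + (k:ℝ)), A x)
              ≤ ENNReal.ofReal (∫ x in x₀..(x₀ + (k:ℝ)), B x) :=
                ENNReal.ofReal_le_ofReal (hIAle k)
            _ = ∫⁻ x in Set.Icc x₀ (x₀ + (k:ℝ)), ENNReal.ofReal (B x) :=
                (hlink B hBcont hB0 k).symm
            _ ≤ _ := lintegral_mono_set (hIccsub k)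
  · intro h
    have hfin : (∫⁻ x in Set.Ici x₀, ENNReal.ofReal (B x)) ≠ ⊤ := by
      have hbound : (∫⁻ x in Set.Ici x₀, ENNReal.ofReal (B x))
          ≤ (∫⁻ x in Set.Ici x₀, ENNReal.ofReal (A x))
            + ENNReal.ofReal ((x₀ * φ x₀)^(m+1) / ((m:ℝ)+1)) := by
        calc ∫⁻ x in Set.Ici x₀, ENNReal.ofReal (B x)
            ≤ ⨆ k : ℕ, ∫⁻ x in Set.Icc x₀ (x₀ + (k:ℝ)), ENNReal.ofReal (B x) :=
              my_lintegral_Ici_le_iSup_Icc x₀ _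
          _ ≤ _ := by
              refine iSup_le fun k => ?_
              rw [hlink B hBcont hB0 k]
              calc ENNReal.ofReal (∫ x in x₀..(x₀ + (k:ℝ)), B x)
                  ≤ ENNReal.ofReal ((∫ x in x₀..(x₀ + (k:ℝ)), A x)
                      + (x₀ * φ x₀)^(m+1) / ((m:ℝ)+1)) :=
                    ENNReal.ofReal_le_ofReal (hIBle k)
                _ ≤ ENNReal.ofReal (∫ x in x₀..(x₀ + (k:ℝ)), A x)
                      + ENNReal.ofReal ((x₀ * φ x₀)^(m+1) / ((m:ℝ)+1)) :=
                    ENNReal.ofReal_add_le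
                _ = (∫⁻ x in Set.Icc x₀ (x₀ + (k:ℝ)), ENNReal.ofReal (A x))
                      + ENNReal.ofReal ((x₀ * φ x₀)^(m+1) / ((m:ℝ)+1)) := by
                    rw [hlink A hAcont hA0 k]
                _ ≤ _ := add_le_add (lintegral_mono_set (hIccsub k)) le_rfl
      exact ne_top_of_le_ne_top (ENNReal.add_ne_top.mpr ⟨h, ENNReal.ofReal_ne_top⟩) hbound
    exact ENNReal.mul_ne_top ENNReal.ofReal_ne_top hfin
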